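/- For symmetric positive definite real n×n matrices A and B, the matrix B·A^{-1/2}·(A^{1/2}(A+B)A^{1/2})^{1/2}·A^{-1/2} is symmetric if and only if A and B commute. -/

import Mathlib

open Matrix

variable {n : ℕ}

private lemma stmt1_UU_cancel {U : Matrix (Fin n) (Fin n) ℝ} (hU : U * star U = 1)
    (Z : Matrix (Fin n) (Fin n) ℝ) : U * (star U * Z) = Z := by
  rw [← Matrix.mul_assoc, hU, Matrix.one_mul]

private lemma stmt1_UU_cancel' {U : Matrix (Fin n) (Fin n) ℝ} (hU : star U * U = 1)
    (Z : Matrix (Fin n) (Fin n) ℝ) : star U * (U * Z) = Z := by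
  rw [← Matrix.mul_assoc, hU, Matrix.one_mul]

private lemma stmt1_conj_mul {U : Matrix (Fin n) (Fin n) ℝ} (hU : U * star U = 1)
    (X Y : Matrix (Fin n) (Fin n) ℝ) :
    (star U * X * U) * (star U * Y * U) = star U * (X * Y) * U := by
  simp only [Matrix.mul_assoc, stmt1_UU_cancel hU]

private lemma stmt1_conj_mul' {U : Matrix (Fin n) (Fin n) ℝ} (hU : star U * U = 1)
    (X Y : Matrix (Fin n) (Fin n) ℝ) :
    (U * X * star U) * (U * Y * star U) = U * (X * Y) * star U := by
  simp only [Matrix.mul_assoc, stmt1_UU_cancel' hU]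

private lemma stmt1_unconj {U : Matrix (Fin n) (Fin n) ℝ}
    (hU2 : U * star U = 1) (X : Matrix (Fin n) (Fin n) ℝ) :
    U * (star U * X * U) * star U = X := by
  calc U * (star U * X * U) * star U = (U * star U) * X * (U * star U) := by
        simp only [Matrix.mul_assoc]
    _ = X := by rw [hU2, Matrix.one_mul, Matrix.mul_one]

private lemma stmt1_spec {T : Matrix (Fin n) (Fin n) ℝ} (hT : T.IsHermitian) :
    star (hT.eigenvectorUnitary : Matrix (Fin n) (Fin n) ℝ) * T *
      (hT.eigenvectorUnitary : Matrix (Fin n) (Fin n) ℝ) = diagonal hT.eigenvalues := by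
  have := hT.conjStarAlgAut_star_eigenvectorUnitary
  simpa [RCLike.ofReal_real_eq_id] using this

private lemma stmt1_commute_sqrt {C X : Matrix (Fin n) (Fin n) ℝ} (hC : C.PosDef)
    (h : X * (C * C) = (C * C) * X) : X * C = C * X := by
  set U : Matrix (Fin n) (Fin n) ℝ := (hC.1.eigenvectorUnitary : Matrix (Fin n) (Fin n) ℝ) with hUdef
  have hU1 : star U * U = 1 := Unitary.coe_star_mul_self _
  have hU2 : U * star U = 1 := Unitary.coe_mul_star_self _
  set μ := hC.1.eigenvalues with hμ
  have hspec : star U * C * U = diagonal μ := stmt1_spec hC.1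
  set N := star U * X * U with hN
  have h1 : N * (diagonal μ * diagonal μ) = (diagonal μ * diagonal μ) * N := by
    calc N * (diagonal μ * diagonal μ)
        = (star U * X * U) * ((star U * C * U) * (star U * C * U)) := by rw [hspec, hN]
      _ = star U * (X * (C * C)) * U := by
          rw [stmt1_conj_mul hU2 C C, stmt1_conj_mul hU2 X (C*C)]
      _ = star U * ((C * C) * X) * U := by rw [h]
      _ = (star U * C * U) * (star U * C * U) * (star U * X * U) := by
          rw [stmt1_conj_mul hU2 C C, stmt1_conj_mul hU2 (C*C) X]
      _ = (diagonal μ * diagonal μ) * N := by rw [hspec, hN]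
  have entry : ∀ i j, N i j * μ j = μ i * N i j := by
    intro i j
    have h2 := congrFun (congrFun h1 i) j
    simp only [diagonal_mul_diagonal, Matrix.mul_diagonal, Matrix.diagonal_mul] at h2
    rcases eq_or_ne (N i j) 0 with h0 | h0
    · simp [h0]
    · have h3 : ((μ j - μ i) * (μ j + μ i)) * N i j = 0 := by linear_combination h2
      rcases mul_eq_zero.1 h3 with h4 | h4
      · rcases mul_eq_zero.1 h4 with h5 | h5
        · have : μ j = μ i := by linarith
          rw [this]; ring
        · have hpi := hC.eigenvalues_pos i
          have hpj := hC.eigenvalues_pos j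
          exfalso; rw [← hμ] at hpi hpj; linarith
      · exact absurd h4 h0
  have h3 : N * diagonal μ = diagonal μ * N := by
    ext i j
    simp only [Matrix.mul_diagonal, Matrix.diagonal_mul]
    exact entry i j
  have hCeq : C = U * diagonal μ * star U := by rw [← hspec, stmt1_unconj hU2]
  have hXeq : X = U * N * star U := by rw [hN, stmt1_unconj hU2]
  calc X * C = (U * N * star U) * (U * diagonal μ * star U) := by rw [← hCeq, ← hXeq]
    _ = U * (N * diagonal μ) * star U := stmt1_conj_mul' hU1 _ _
    _ = U * (diagonal μ * N) * star U := by rw [h3]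
    _ = (U * diagonal μ * star U) * (U * N * star U) := (stmt1_conj_mul' hU1 _ _).symm
    _ = C * X := by rw [← hCeq, ← hXeq]

private lemma stmt1_TDT {T D : Matrix (Fin n) (Fin n) ℝ} (hT : T.IsHermitian)
    (hev : ∀ i, 1 < hT.eigenvalues i * hT.eigenvalues i)
    (hD : T * D * T = D) : D = 0 := by
  set U : Matrix (Fin n) (Fin n) ℝ := (hT.eigenvectorUnitary : Matrix (Fin n) (Fin n) ℝ) with hUdef
  have hU2 : U * star U = 1 := Unitary.coe_mul_star_self _
  set μ := hT.eigenvalues with hμ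
  have hspec : star U * T * U = diagonal μ := stmt1_spec hT
  set N := star U * D * U with hN
  have h1 : diagonal μ * N * diagonal μ = N := by
    calc diagonal μ * N * diagonal μ
        = (star U * T * U) * (star U * D * U) * (star U * T * U) := by rw [hspec, hN]
      _ = star U * (T * D * T) * U := by
          rw [stmt1_conj_mul hU2 T D, stmt1_conj_mul hU2 (T*D) T]
      _ = N := by rw [hD, hN]
  have hN0 : N = 0 := by
    ext i j
    have h2 := congrFun (congrFun h1 i) j
    simp only [Matrix.mul_diagonal, Matrix.diagonal_mul] at h2
    show N i j = 0
    by_contra h0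
    have h3 : μ i * μ j = 1 := by
      have h4 : (μ i * μ j - 1) * N i j = 0 := by linear_combination h2
      rcases mul_eq_zero.1 h4 with h5 | h5
      · linarith
      · exact absurd h5 h0
    nlinarith [hev i, hev j]
  have hfin := stmt1_unconj hU2 D
  rw [← hN, hN0] at hfin
  simpa using hfin.symm

/-- For symmetric positive definite A, B with S = A^{1/2} and
R = (A^{1/2}(A+B)A^{1/2})^{1/2}, the matrix B·S⁻¹·R·S⁻¹ is symmetric iff A and B
commute. -/
theorem stmt_1 {n : ℕ} (A B S R : Matrix (Fin n) (Fin n) ℝ)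
    (hA : A.PosDef) (hAs : A.IsSymm) (hB : B.PosDef) (hBs : B.IsSymm)
    (hS : S.PosDef) (hSs : S.IsSymm) (hSsq : S * S = A)
    (hR : R.PosDef) (hRs : R.IsSymm) (hRsq : R * R = S * (A + B) * S) :
    (B * S⁻¹ * R * S⁻¹).IsSymm ↔ A * B = B * A := by
  have hdet : IsUnit S.det := hS.det_pos.ne'.isUnit
  have hSinv : S * S⁻¹ = 1 := mul_nonsing_inv S hdet
  have hinvS : S⁻¹ * S = 1 := nonsing_inv_mul S hdet
  have cancel1 : ∀ Z : Matrix (Fin n) (Fin n) ℝ, S * (S⁻¹ * Z) = Z := fun Z => by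
    rw [← Matrix.mul_assoc, hSinv, Matrix.one_mul]
  have cancel2 : ∀ Z : Matrix (Fin n) (Fin n) ℝ, S⁻¹ * (S * Z) = Z := fun Z => by
    rw [← Matrix.mul_assoc, hinvS, Matrix.one_mul]
  have hSis : S⁻¹ᵀ = S⁻¹ := by rw [Matrix.transpose_nonsing_inv, hSs.eq]
  set T := S⁻¹ * R * S⁻¹ with hT
  have hTt : Tᵀ = T := by
    rw [hT, Matrix.transpose_mul, Matrix.transpose_mul, hSis, hRs.eq]
    simp only [Matrix.mul_assoc]
  have hsymm_iff : (B * S⁻¹ * R * S⁻¹).IsSymm ↔ B * T = T * B := by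
    have hMT : B * S⁻¹ * R * S⁻¹ = B * T := by rw [hT]; simp only [Matrix.mul_assoc]
    rw [Matrix.IsSymm, hMT, Matrix.transpose_mul, hTt, hBs.eq]
    exact comm
  have hTAT : T * A * T = A + B := by
    have key : S⁻¹ * R * S⁻¹ * (S * S) * (S⁻¹ * R * S⁻¹) = A + B := calc
      S⁻¹ * R * S⁻¹ * (S * S) * (S⁻¹ * R * S⁻¹)
        = S⁻¹ * (R * (S⁻¹ * (S * (S * (S⁻¹ * (R * S⁻¹)))))) := by
          simp only [Matrix.mul_assoc]
      _ = S⁻¹ * (R * (R * S⁻¹)) := by rw [cancel2, cancel1]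
      _ = S⁻¹ * ((R * R) * S⁻¹) := by rw [Matrix.mul_assoc]
      _ = S⁻¹ * (S * ((A + B) * (S * S⁻¹))) := by rw [hRsq]; simp only [Matrix.mul_assoc]
      _ = A + B := by rw [cancel2, hSinv, Matrix.mul_one]
    conv_lhs => rw [hT, ← hSsq]
    exact key
  rw [hsymm_iff]
  constructor
  · intro hc
    have hTh : T.IsHermitian := by
      rw [Matrix.IsHermitian, Matrix.conjTranspose_eq_transpose_of_trivial]
      exact hTt
    set μ := hTh.eigenvalues with hμ
    have hev : ∀ i, 1 < μ i * μ i := by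
      intro i
      set v : Fin n → ℝ := ⇑(hTh.eigenvectorBasis i) with hv
      have hvz : v ≠ 0 := by
        intro hcon
        exact hTh.eigenvectorBasis.orthonormal.ne_zero i (by ext k; exact congrFun hcon k)
      have hTv : T *ᵥ v = μ i • v := hTh.mulVec_eigenvectorBasis i
      have hstar : star v = v := by ext k; simp
      have hApos : 0 < v ⬝ᵥ (A *ᵥ v) := by have := hA.dotProduct_mulVec_pos hvz; rwa [hstar] at this
      have hBpos : 0 < v ⬝ᵥ (B *ᵥ v) := by have := hB.dotProduct_mulVec_pos hvz; rwa [hstar] at this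
      have hq : v ⬝ᵥ ((T * A * T) *ᵥ v) = (μ i * μ i) * (v ⬝ᵥ (A *ᵥ v)) := by
        rw [← Matrix.mulVec_mulVec, ← Matrix.mulVec_mulVec, hTv, Matrix.mulVec_smul,
          Matrix.mulVec_smul, dotProduct_smul, Matrix.dotProduct_mulVec,
          ← Matrix.mulVec_transpose, hTt, hTv, smul_dotProduct]
        simp only [smul_eq_mul]
        ring
      have hq2 : v ⬝ᵥ ((T * A * T) *ᵥ v) = v ⬝ᵥ (A *ᵥ v) + v ⬝ᵥ (B *ᵥ v) := by
        rw [hTAT, Matrix.add_mulVec, dotProduct_add]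
      nlinarith [hApos, hBpos]
    have hBeq : B = T * A * T - A := by rw [hTAT]; abel
    have hD : T * (A * T - T * A) * T = A * T - T * A := by
      have h5 : (T * A * T - A) * T = T * (T * A * T - A) := by rw [← hBeq]; exact hc
      have expand : T * (A * T - T * A) * T - (A * T - T * A)
          = (T * A * T - A) * T - T * (T * A * T - A) := by noncomm_ring
      have h6 : T * (A * T - T * A) * T - (A * T - T * A) = 0 := by
        rw [expand, h5, sub_self]
      exact sub_eq_zero.mp h6
    have hAT : A * T = T * A := sub_eq_zero.mp (stmt1_TDT hTh hev hD)
    have c1 : Commute A T := hAT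
    have c2 : Commute A (T * A * T) := (c1.mul_right (Commute.refl A)).mul_right c1
    rw [hBeq, mul_sub, sub_mul, c2.eq]
  · intro hAB
    have hBS : Commute B S := stmt1_commute_sqrt hS (by rw [hSsq]; exact hAB.symm)
    have hBAB : Commute B (A + B) := by
      rw [Commute, SemiconjBy, mul_add, add_mul, hAB]
    have hBR : Commute B R :=
      stmt1_commute_sqrt hR (by rw [hRsq]; exact ((hBS.mul_right hBAB).mul_right hBS).eq)
    have hBSi : Commute B S⁻¹ := by
      have h8 : S * (B * S⁻¹) = B := by
        rw [← Matrix.mul_assoc, ← hBS.eq, Matrix.mul_assoc, hSinv, Matrix.mul_one]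
      show B * S⁻¹ = S⁻¹ * B
      calc B * S⁻¹ = S⁻¹ * (S * (B * S⁻¹)) := (cancel2 _).symm
        _ = S⁻¹ * B := by rw [h8]
    exact ((hBSi.mul_right hBR).mul_right hBSi).eq
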